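/- Let (H,J) be a Krein space and let S = Gr(K) be a maximal uniformly J-positive subspace with angular operator K: H₊ → H₋, ‖K‖ < 1. Then for any unitary operators V₊ on H₊ and V₋ on H₋, the block operator matrix U = [[(I₊ − K*K)^{-1/2}V₊, K*(I₋ − KK*)^{-1/2}V₋], [K(I₊ − K*K)^{-1/2}V₊, (I₋ − KK*)^{-1/2}V₋]] with respect to H = H₊ ⊕ H₋ is J-unitary and maps H₊ onto S. -/

import Mathlib

open ContinuousLinearMap
open scoped ComplexInnerProductSpace

set_option maxHeartbeats 3200000

variable {H : Type*} [NormedAddCommGroup H] [InnerProductSpace ℂ H] [CompleteSpace H]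

/-- Let `S = Gr(K)` be a maximal uniformly `J`-positive subspace with angular operator
`K : H₊ → H₋`, `‖K‖ < 1`. For any unitaries `V₊`, `V₋` of `H₊`, `H₋`, the block operator
`U = [[(I−K*K)^{-1/2}V₊, K*(I−KK*)^{-1/2}V₋], [K(I−K*K)^{-1/2}V₊, (I−KK*)^{-1/2}V₋]]` is
`J`-unitary and maps `H₊` onto `S`. -/
theorem stmt16 (J : H →L[ℂ] H)
    (hJsa : ContinuousLinearMap.adjoint J = J) (hJ2 : J ∘L J = 1)
    (Hp Hm : Submodule ℂ H) [CompleteSpace Hp] [CompleteSpace Hm]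
    (hHp : Hp = LinearMap.ker ((J - 1 : H →L[ℂ] H) : H →ₗ[ℂ] H)) (hHm : Hm = LinearMap.ker ((J + 1 : H →L[ℂ] H) : H →ₗ[ℂ] H))
    (K : Hp →L[ℂ] Hm) (hK : ‖K‖ < 1)
    -- `Ap = (I₊ − K*K)^{-1/2}` : the positive square root of the inverse of `I₊ − K*K`
    (Ap : Hp →L[ℂ] Hp) (hApPos : Ap.IsPositive)
    (hAp : (Ap ∘L Ap) ∘L (1 - ContinuousLinearMap.adjoint K ∘L K) = 1)
    (hAp' : (1 - ContinuousLinearMap.adjoint K ∘L K) ∘L (Ap ∘L Ap) = 1)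
    -- `Am = (I₋ − KK*)^{-1/2}` : the positive square root of the inverse of `I₋ − KK*`
    (Am : Hm →L[ℂ] Hm) (hAmPos : Am.IsPositive)
    (hAm : (Am ∘L Am) ∘L (1 - K ∘L ContinuousLinearMap.adjoint K) = 1)
    (hAm' : (1 - K ∘L ContinuousLinearMap.adjoint K) ∘L (Am ∘L Am) = 1)
    -- unitaries on `H₊` and `H₋`
    (Vp : Hp →L[ℂ] Hp) (hVp : Vp ∘L ContinuousLinearMap.adjoint Vp = 1)
    (hVp' : ContinuousLinearMap.adjoint Vp ∘L Vp = 1)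
    (Vm : Hm →L[ℂ] Hm) (hVm : Vm ∘L ContinuousLinearMap.adjoint Vm = 1)
    (hVm' : ContinuousLinearMap.adjoint Vm ∘L Vm = 1)
    -- `U` is the block operator matrix above, w.r.t. `H = H₊ ⊕ H₋`
    (U : H →L[ℂ] H)
    (hUp : ∀ f : Hp, U (f : H) = (Ap (Vp f) : H) + (K (Ap (Vp f)) : H))
    (hUm : ∀ g : Hm,
      U (g : H) = ((ContinuousLinearMap.adjoint K) (Am (Vm g)) : H) + (Am (Vm g) : H)) :
    (ContinuousLinearMap.adjoint U) ∘L J ∘L U = J ∧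
    (∃ W : H →L[ℂ] H, U ∘L W = 1 ∧ W ∘L U = 1) ∧
    Submodule.map (U : H →ₗ[ℂ] H) Hp = LinearMap.range ((Hp.subtypeL + Hm.subtypeL ∘L K : Hp →L[ℂ] H) : Hp →ₗ[ℂ] H) := by
  set K' := ContinuousLinearMap.adjoint K with hK'def
  set T : Hp →L[ℂ] Hp := 1 - K' ∘L K with hTdef
  set T' : Hm →L[ℂ] Hm := 1 - K ∘L K' with hT'def
  -- basic facts about J
  have hJJ : ∀ x : H, J (J x) = x := by
    intro x
    have := DFunLike.congr_fun hJ2 x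
    simpa using this
  have hJp : ∀ f : Hp, J (f : H) = (f : H) := by
    intro f
    have hf : (f : H) ∈ LinearMap.ker ((J - 1 : H →L[ℂ] H) : H →ₗ[ℂ] H) := by rw [← hHp]; exact f.2
    rw [LinearMap.mem_ker] at hf
    have h0 : J (f : H) - (f : H) = 0 := by
      simpa [ContinuousLinearMap.sub_apply] using hf
    exact sub_eq_zero.mp h0
  have hJm : ∀ g : Hm, J (g : H) = -(g : H) := by
    intro g
    have hg : (g : H) ∈ LinearMap.ker ((J + 1 : H →L[ℂ] H) : H →ₗ[ℂ] H) := by rw [← hHm]; exact g.2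
    rw [LinearMap.mem_ker] at hg
    have h0 : J (g : H) + (g : H) = 0 := by
      simpa [ContinuousLinearMap.add_apply] using hg
    exact eq_neg_of_add_eq_zero_left h0
  -- decomposition of H
  have hdec : ∀ x : H, ∃ (f : Hp) (g : Hm), x = (f : H) + (g : H) := by
    intro x
    refine ⟨⟨(2:ℂ)⁻¹ • (x + J x), ?_⟩, ⟨(2:ℂ)⁻¹ • (x - J x), ?_⟩, ?_⟩
    · rw [hHp, LinearMap.mem_ker, ContinuousLinearMap.coe_coe]
      have h : (J - 1) ((2:ℂ)⁻¹ • (x + J x))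
          = (2:ℂ)⁻¹ • ((J x + J (J x)) - (x + J x)) := by
        simp only [ContinuousLinearMap.sub_apply, ContinuousLinearMap.one_apply,
          map_smul, map_add, smul_sub, smul_add]
        abel
      rw [h, hJJ x, show J x + x - (x + J x) = 0 by abel]
      simp
    · rw [hHm, LinearMap.mem_ker, ContinuousLinearMap.coe_coe]
      have h : (J + 1) ((2:ℂ)⁻¹ • (x - J x))
          = (2:ℂ)⁻¹ • ((J x - J (J x)) + (x - J x)) := by
        simp only [ContinuousLinearMap.add_apply, ContinuousLinearMap.one_apply,
          map_smul, map_sub, smul_sub, smul_add]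
        abel
      rw [h, hJJ x, show J x - x + (x - J x) = 0 by abel]
      simp
    · show x = (2:ℂ)⁻¹ • (x + J x) + (2:ℂ)⁻¹ • (x - J x)
      rw [← smul_add, show x + J x + (x - J x) = (2:ℂ) • x by rw [two_smul]; abel,
        smul_smul]
      norm_num
  -- orthogonality of Hp and Hm
  have horth : ∀ (f : Hp) (g : Hm), ⟪(f : H), (g : H)⟫ = 0 := by
    intro f g
    have h1 : ⟪J (f : H), (g : H)⟫ = ⟪(f : H), J (g : H)⟫ := by
      conv_lhs => rw [← hJsa]
      exact ContinuousLinearMap.adjoint_inner_left J _ _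
    rw [hJp, hJm, inner_neg_right] at h1
    have h2 : ⟪(f : H), (g : H)⟫ + ⟪(f : H), (g : H)⟫ = 0 :=
      add_eq_zero_iff_eq_neg.mpr h1
    exact add_self_eq_zero.mp h2
  have horth' : ∀ (g : Hm) (f : Hp), ⟪(g : H), (f : H)⟫ = 0 := fun g f =>
    inner_eq_zero_symm.mp (horth f g)
  -- self-adjointness of the square roots
  have hApSa : ContinuousLinearMap.adjoint Ap = Ap :=
    ContinuousLinearMap.isSelfAdjoint_iff'.mp hApPos.isSelfAdjoint
  have hAmSa : ContinuousLinearMap.adjoint Am = Am :=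
    ContinuousLinearMap.isSelfAdjoint_iff'.mp hAmPos.isSelfAdjoint
  -- operator algebra: Ap T Ap = 1
  have hATA : ∀ a : Hp, Ap (T (Ap a)) = a := by
    have h1 : (T * Ap) * Ap = 1 := by
      have h : T * (Ap * Ap) = 1 := hAp'
      rwa [← mul_assoc] at h
    have h2 : Ap * (Ap * T) = 1 := by
      have h : (Ap * Ap) * T = 1 := hAp
      rwa [mul_assoc] at h
    have hcomm : T * Ap = Ap * T := left_inv_eq_right_inv h1 h2
    have h3 : Ap * (T * Ap) = 1 := by
      rw [hcomm, ← mul_assoc]; exact hAp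
    intro a
    have := DFunLike.congr_fun h3 a
    simpa using this
  -- operator algebra: Am T' Am = 1
  have hATA' : ∀ b : Hm, Am (T' (Am b)) = b := by
    have h1 : (T' * Am) * Am = 1 := by
      have h : T' * (Am * Am) = 1 := hAm'
      rwa [← mul_assoc] at h
    have h2 : Am * (Am * T') = 1 := by
      have h : (Am * Am) * T' = 1 := hAm
      rwa [mul_assoc] at h
    have hcomm : T' * Am = Am * T' := left_inv_eq_right_inv h1 h2
    have h3 : Am * (T' * Am) = 1 := by
      rw [hcomm, ← mul_assoc]; exact hAm
    intro b
    have := DFunLike.congr_fun h3 b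
    simpa using this
  -- J applied to U on the pieces
  have hUpJ : ∀ f : Hp, J (U (f : H)) = (Ap (Vp f) : H) - (K (Ap (Vp f)) : H) := by
    intro f
    rw [hUp f, map_add, hJp, hJm, ← sub_eq_add_neg]
  have hUmJ : ∀ g : Hm, J (U (g : H)) = (K' (Am (Vm g)) : H) - (Am (Vm g) : H) := by
    intro g
    rw [hUm g, map_add, hJp, hJm, ← sub_eq_add_neg]
  -- inner product expansion lemmas
  have hstepP : ∀ b b' : Hp,
      ⟪(b : H) - (K b : H), (b' : H) + (K b' : H)⟫ = ⟪b, T b'⟫ := by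
    intro b b'
    have e2 : ⟪(K b : H), (K b' : H)⟫ = ⟪b, K' (K b')⟫ := by
      rw [(Submodule.coe_inner Hm (K b) (K b')).symm]
      exact (ContinuousLinearMap.adjoint_inner_right K b (K b')).symm
    rw [inner_sub_left, inner_add_right, inner_add_right, horth b (K b'),
      horth' (K b) b', e2, (Submodule.coe_inner Hp b b').symm]
    have hv : b' - K' (K b') = T b' := by
      rw [hTdef]
      simp [ContinuousLinearMap.sub_apply, ContinuousLinearMap.comp_apply]
    have h3 : (⟪b, b'⟫ : ℂ) - ⟪b, K' (K b')⟫ = ⟪b, T b'⟫ := by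
      rw [← inner_sub_right, hv]
    linear_combination h3
  have hstepM : ∀ b b' : Hm,
      ⟪(K' b : H) - (b : H), (K' b' : H) + (b' : H)⟫ = -⟪b, T' b'⟫ := by
    intro b b'
    have e2 : ⟪(K' b : H), (K' b' : H)⟫ = ⟪b, K (K' b')⟫ := by
      rw [(Submodule.coe_inner Hp (K' b) (K' b')).symm]
      exact ContinuousLinearMap.adjoint_inner_left K (K' b') b
    rw [inner_sub_left, inner_add_right, inner_add_right, horth (K' b) b',
      horth' b (K' b'), e2, (Submodule.coe_inner Hm b b').symm]
    have hv : K (K' b') - b' = -(T' b') := by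
      rw [hT'def]
      simp only [ContinuousLinearMap.sub_apply, ContinuousLinearMap.comp_apply,
        ContinuousLinearMap.one_apply, neg_sub]
    have h3 : (⟪b, K (K' b')⟫ : ℂ) - ⟪b, b'⟫ = -⟪b, T' b'⟫ := by
      rw [← inner_sub_right, hv, inner_neg_right]
    linear_combination h3
  -- the four block identities
  have hPP : ∀ f f' : Hp, ⟪J (U (f : H)), U (f' : H)⟫ = ⟪J (f : H), (f' : H)⟫ := by
    intro f f'
    rw [hUpJ f, hUp f', hJp f, hstepP (Ap (Vp f)) (Ap (Vp f'))]
    calc ⟪Ap (Vp f), T (Ap (Vp f'))⟫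
        = ⟪Vp f, Ap (T (Ap (Vp f')))⟫ := by
          have h0 := ContinuousLinearMap.adjoint_inner_left Ap (T (Ap (Vp f'))) (Vp f)
          rw [hApSa] at h0
          exact h0
      _ = ⟪Vp f, Vp f'⟫ := by rw [hATA]
      _ = ⟪f, f'⟫ := by
          rw [← ContinuousLinearMap.adjoint_inner_right Vp f (Vp f')]
          have h : (ContinuousLinearMap.adjoint Vp) (Vp f') = f' := by
            have := DFunLike.congr_fun hVp' f'; simpa using this
          rw [h]
      _ = ⟪(f : H), (f' : H)⟫ := Submodule.coe_inner Hp f f'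
  have hPM : ∀ (f : Hp) (g : Hm), ⟪J (U (f : H)), U (g : H)⟫ = ⟪J (f : H), (g : H)⟫ := by
    intro f g
    rw [hUpJ f, hUm g, hJp f, horth f g]
    set a := Ap (Vp f)
    set b := Am (Vm g)
    have e3 : ⟪(a : H), (K' b : H)⟫ = ⟪(K a : H), (b : H)⟫ := by
      rw [(Submodule.coe_inner Hp a (K' b)).symm, (Submodule.coe_inner Hm (K a) b).symm]
      exact ContinuousLinearMap.adjoint_inner_right K a b
    rw [inner_sub_left, inner_add_right, inner_add_right, horth a b,
      horth' (K a) (K' b), e3]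
    ring
  have hMP : ∀ (g : Hm) (f : Hp), ⟪J (U (g : H)), U (f : H)⟫ = ⟪J (g : H), (f : H)⟫ := by
    intro g f
    rw [hUmJ g, hUp f, hJm g, inner_neg_left, horth' g f]
    set a := Ap (Vp f)
    set b := Am (Vm g)
    have e3 : ⟪(K' b : H), (a : H)⟫ = ⟪(b : H), (K a : H)⟫ := by
      rw [(Submodule.coe_inner Hp (K' b) a).symm, (Submodule.coe_inner Hm b (K a)).symm]
      exact ContinuousLinearMap.adjoint_inner_left K a b
    rw [inner_sub_left, inner_add_right, inner_add_right, horth (K' b) (K a),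
      horth' b a, e3]
    ring
  have hMM : ∀ g g' : Hm, ⟪J (U (g : H)), U (g' : H)⟫ = ⟪J (g : H), (g' : H)⟫ := by
    intro g g'
    rw [hUmJ g, hUm g', hJm g, inner_neg_left, hstepM (Am (Vm g)) (Am (Vm g')),
      (Submodule.coe_inner Hm g g').symm]
    congr 1
    calc ⟪Am (Vm g), T' (Am (Vm g'))⟫
        = ⟪Vm g, Am (T' (Am (Vm g')))⟫ := by
          have h0 := ContinuousLinearMap.adjoint_inner_left Am (T' (Am (Vm g'))) (Vm g)
          rw [hAmSa] at h0
          exact h0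
      _ = ⟪Vm g, Vm g'⟫ := by rw [hATA']
      _ = ⟪g, g'⟫ := by
          rw [← ContinuousLinearMap.adjoint_inner_right Vm g (Vm g')]
          have h : (ContinuousLinearMap.adjoint Vm) (Vm g') = g' := by
            have := DFunLike.congr_fun hVm' g'; simpa using this
          rw [h]
  -- the key identity
  have key : ∀ x y : H, ⟪J (U x), U y⟫ = ⟪J x, y⟫ := by
    intro x y
    obtain ⟨f, g, rfl⟩ := hdec x
    obtain ⟨f', g', rfl⟩ := hdec y
    simp only [map_add, inner_add_left, inner_add_right]
    rw [hPP f f', hPM f g', hMP g f', hMM g g']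
  have part1 : (ContinuousLinearMap.adjoint U) ∘L J ∘L U = J := by
    ext x
    refine ext_inner_right ℂ fun y => ?_
    simp only [ContinuousLinearMap.comp_apply]
    rw [ContinuousLinearMap.adjoint_inner_left]
    exact key x y
  -- solving on the plus/minus pieces
  have hsolve : ∀ a : Hp,
      U (((ContinuousLinearMap.adjoint Vp) (T (Ap a)) : Hp) : H)
        = (a : H) + (K a : H) := by
    intro a
    rw [hUp]
    have hv : Vp ((ContinuousLinearMap.adjoint Vp) (T (Ap a))) = T (Ap a) := by
      have := DFunLike.congr_fun hVp (T (Ap a)); simpa using this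
    rw [hv, hATA]
  have hsolvem : ∀ b : Hm,
      U (((ContinuousLinearMap.adjoint Vm) (T' (Am b)) : Hm) : H)
        = (K' b : H) + (b : H) := by
    intro b
    rw [hUm]
    have hv : Vm ((ContinuousLinearMap.adjoint Vm) (T' (Am b))) = T' (Am b) := by
      have := DFunLike.congr_fun hVm (T' (Am b)); simpa using this
    rw [hv, hATA']
  -- surjectivity of U
  have hsurj : ∀ h : H, ∃ x : H, U x = h := by
    intro h
    obtain ⟨p, m, rfl⟩ := hdec h
    set a : Hp := Ap (Ap (p - K' m)) with ha
    set b : Hm := m - K a with hb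
    refine ⟨(((ContinuousLinearMap.adjoint Vp) (T (Ap a)) : Hp) : H)
      + (((ContinuousLinearMap.adjoint Vm) (T' (Am b)) : Hm) : H), ?_⟩
    rw [map_add, hsolve a, hsolvem b]
    have hTa : T a = p - K' m := by
      have h0 := DFunLike.congr_fun hAp' (p - K' m)
      simp only [ContinuousLinearMap.comp_apply, ContinuousLinearMap.one_apply] at h0
      rw [ha]
      exact h0
    have h1 : a + K' b = p := by
      have hab : a + K' b = T a + K' m := by
        rw [hb, map_sub, hTdef]
        simp only [ContinuousLinearMap.sub_apply, ContinuousLinearMap.comp_apply,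
          ContinuousLinearMap.one_apply]
        abel
      rw [hab, hTa]; abel
    have h2 : K a + b = m := by rw [hb]; abel
    have c1 : ((a + K' b : Hp) : H) = (p : H) := by rw [h1]
    have c2 : ((K a + b : Hm) : H) = (m : H) := by rw [h2]
    push_cast at c1 c2
    rw [← c1, ← c2]
    abel
  -- invertibility of U
  have hWU : (J ∘L (ContinuousLinearMap.adjoint U) ∘L J) ∘L U = 1 := by
    calc (J ∘L (ContinuousLinearMap.adjoint U) ∘L J) ∘L U
        = J ∘L ((ContinuousLinearMap.adjoint U) ∘L J ∘L U) := rfl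
      _ = J ∘L J := by rw [part1]
      _ = 1 := hJ2
  have hUW : U ∘L (J ∘L (ContinuousLinearMap.adjoint U) ∘L J) = 1 := by
    ext h
    obtain ⟨x, rfl⟩ := hsurj h
    have hx := DFunLike.congr_fun hWU x
    simp only [ContinuousLinearMap.comp_apply, ContinuousLinearMap.one_apply] at hx ⊢
    rw [hx]
  -- the range identity
  have part3 : Submodule.map (U : H →ₗ[ℂ] H) Hp = LinearMap.range ((Hp.subtypeL + Hm.subtypeL ∘L K : Hp →L[ℂ] H) : Hp →ₗ[ℂ] H) := by
    ext x
    simp only [Submodule.mem_map, LinearMap.mem_range, ContinuousLinearMap.coe_coe, ContinuousLinearMap.add_apply,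
      ContinuousLinearMap.comp_apply, Submodule.subtypeL_apply]
    constructor
    · rintro ⟨y, hy, rfl⟩
      exact ⟨Ap (Vp ⟨y, hy⟩), (hUp ⟨y, hy⟩).symm⟩
    · rintro ⟨f, rfl⟩
      exact ⟨(((ContinuousLinearMap.adjoint Vp) (T (Ap f)) : Hp) : H),
        Submodule.coe_mem _, hsolve f⟩
  exact ⟨part1, ⟨J ∘L (ContinuousLinearMap.adjoint U) ∘L J, hUW, hWU⟩, part3⟩
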